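/- arXiv:1403.5357 — 3 statements merged into one kernel-verified Lean document; each statement's English description precedes it below -/
import Mathlib

section
/- For every ε > 0 and every n ∈ ℕ there exists δ > 0 with the following property: for every unital C*-algebra A and all projections q_1, …, q_n in A satisfying ‖q_i q_j‖ < δ for all i ≠ j, there exist mutually orthogonal projections p_1, …, p_n in A (i.e. p_i p_j = 0 for i ≠ j) such that ‖p_i − q_i‖ < ε for all 1 ≤ i ≤ n. -/
open scoped ContinuousMapZero

section helpers

variable {A : Type*} [CStarAlgebra A]

lemma my_norm_le_one {p : A} (hp : IsSelfAdjoint p) (h2 : p ^ 2 = p) : ‖p‖ ≤ 1 := by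
  have h := CStarRing.norm_star_mul_self (x := p)
  rw [hp.star_eq, ← pow_two, h2] at h
  nlinarith [norm_nonneg p]


variable {A : Type*} [CStarAlgebra A]

lemma my_ann {a x : A} (ha : IsSelfAdjoint a) {f : ℝ → ℝ} (hf : Continuous f) (hf0 : f 0 = 0)
    (h1 : x * a = 0) : x * cfcₙ f a = 0 := by
  have hid : cfcₙHom (R := ℝ) ha (ContinuousMapZero.id (quasispectrum ℝ a)) = a := cfcₙHom_id ha
  rw [cfcₙ_apply f a hf.continuousOn hf0 ha]
  refine ContinuousMapZero.mul_nonUnitalStarAlgHom_apply_eq_zero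
    (cfcₙHom (R := ℝ) ha) x ?_ ?_ (cfcₙHom_continuous ha) _
  · rw [hid]; exact h1
  · rw [star_trivial, hid]; exact h1

lemma my_ann' {a x : A} (ha : IsSelfAdjoint a) {f : ℝ → ℝ} (hf : Continuous f) (hf0 : f 0 = 0)
    (h1 : a * x = 0) : cfcₙ f a * x = 0 := by
  have hid : cfcₙHom (R := ℝ) ha (ContinuousMapZero.id (quasispectrum ℝ a)) = a := cfcₙHom_id ha
  rw [cfcₙ_apply f a hf.continuousOn hf0 ha]
  refine ContinuousMapZero.nonUnitalStarAlgHom_apply_mul_eq_zero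
    (cfcₙHom (R := ℝ) ha) x ?_ ?_ (cfcₙHom_continuous ha) _
  · rw [hid]; exact h1
  · rw [star_trivial, hid]; exact h1

lemma my_exists_proj [Nontrivial A] {a : A} (ha : IsSelfAdjoint a) (hsmall : ‖a ^ 2 - a‖ < 1 / 4) :
    ∃ p : A, IsSelfAdjoint p ∧ p ^ 2 = p ∧ ‖p - a‖ ≤ 2 * ‖a ^ 2 - a‖ ∧
      (∀ x : A, x * a = 0 → x * p = 0) ∧ (∀ x : A, a * x = 0 → p * x = 0) := by
  set c : ℝ := ‖a ^ 2 - a‖ with hc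
  have hc0 : 0 ≤ c := norm_nonneg _
  set r : ℝ := Real.sqrt (1 / 4 - c) with hr
  have hr0 : 0 < r := Real.sqrt_pos.mpr (by linarith)
  have hrsq : r ^ 2 = 1 / 4 - c := Real.sq_sqrt (by linarith)
  have hrle : r ≤ 1 / 2 := by
    nlinarith [hrsq, hr0]
  set f : ℝ → ℝ := fun t => min 1 (max 0 ((t - (1 / 2 - r)) / (2 * r))) with hf
  have hfc : Continuous f := by
    apply continuous_const.min
    exact continuous_const.max (by fun_prop)
  have hf0 : f 0 = 0 := by
    have : (0 - (1 / 2 - r)) / (2 * r) ≤ 0 := by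
      apply div_nonpos_of_nonpos_of_nonneg <;> linarith
    simp only [hf, max_eq_left this, min_eq_right zero_le_one]
  -- spectrum bound
  have hcfc : cfc (fun t : ℝ => t ^ 2 - t) a = a ^ 2 - a := by
    rw [cfc_sub _ _ a, cfc_pow (fun t : ℝ => t) 2 a, cfc_id' ℝ a]
  have hspec : ∀ t ∈ spectrum ℝ a, |t ^ 2 - t| ≤ c := by
    intro t ht
    have := norm_apply_le_norm_cfc (fun t : ℝ => t ^ 2 - t) a ht
    rwa [hcfc, Real.norm_eq_abs] at this
  have hcases : ∀ t ∈ spectrum ℝ a,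
      (t ≤ 1 / 2 - r ∧ f t = 0 ∧ |t| ≤ 2 * c) ∨ (1 / 2 + r ≤ t ∧ f t = 1 ∧ |t - 1| ≤ 2 * c) := by
    intro t ht
    have habs := hspec t ht
    have h1 : r ≤ |t - 1/2| := by
      nlinarith [abs_le.mp habs, sq_abs (t - 1/2), abs_nonneg (t - 1/2), le_abs_self (t - 1/2),
        neg_abs_le (t - 1/2)]
    rcases abs_le.mp habs with ⟨hl, hu⟩
    rcases le_or_gt t (1/2) with hth | hth
    · left
      have ht' : t ≤ 1/2 - r := by
        rcases abs_cases (t - 1/2) with ⟨he, _⟩ | ⟨he, _⟩ <;> linarith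
      refine ⟨ht', ?_, ?_⟩
      · have : (t - (1 / 2 - r)) / (2 * r) ≤ 0 :=
          div_nonpos_of_nonpos_of_nonneg (by linarith) (by linarith)
        simp only [hf, max_eq_left this, min_eq_right zero_le_one]
      · have heq : t * (t - 1) = t ^ 2 - t := by ring
        have h2 : |t| * |t - 1| ≤ c := by rw [← abs_mul, heq]; exact habs
        have h3 : (1:ℝ)/2 ≤ |t - 1| := by rcases abs_cases (t-1) with ⟨he,_⟩|⟨he,_⟩ <;> linarith
        have h4 := mul_le_mul_of_nonneg_left h3 (abs_nonneg t)
        nlinarith [abs_nonneg t]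
    · right
      have ht' : 1/2 + r ≤ t := by
        rcases abs_cases (t - 1/2) with ⟨he, _⟩ | ⟨he, _⟩ <;> linarith
      refine ⟨ht', ?_, ?_⟩
      · have h2 : (1:ℝ) ≤ (t - (1 / 2 - r)) / (2 * r) := by
          rw [le_div_iff₀ (by linarith)]; linarith
        have : (1:ℝ) ≤ max 0 ((t - (1 / 2 - r)) / (2 * r)) := le_max_of_le_right h2
        simp only [hf, min_eq_left this]
      · have heq : t * (t - 1) = t ^ 2 - t := by ring
        have h2 : |t| * |t - 1| ≤ c := by rw [← abs_mul, heq]; exact habs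
        have h3 : (1:ℝ)/2 ≤ |t| := by rcases abs_cases t with ⟨he,_⟩|⟨he,_⟩ <;> linarith
        have h4 := mul_le_mul_of_nonneg_right h3 (abs_nonneg (t-1))
        nlinarith [abs_nonneg (t-1)]
  refine ⟨cfc f a, cfc_predicate f a, ?_, ?_, ?_, ?_⟩
  · rw [pow_two, ← cfc_mul f f a hfc.continuousOn hfc.continuousOn]
    apply cfc_congr
    intro t ht
    rcases hcases t ht with ⟨_, hft, _⟩ | ⟨_, hft, _⟩ <;> simp [hft]
  · have : cfc f a - a = cfc (fun t => f t - t) a := by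
      rw [cfc_sub f (fun t : ℝ => t) a hfc.continuousOn (continuousOn_id), cfc_id' ℝ a]
    rw [this]
    apply norm_cfc_le (by linarith)
    intro t ht
    rcases hcases t ht with ⟨_, hft, hb⟩ | ⟨_, hft, hb⟩ <;> rw [hft, Real.norm_eq_abs]
    · rwa [zero_sub, abs_neg]
    · rwa [← abs_neg, neg_sub]
  · intro x hx
    rw [← cfcₙ_eq_cfc hfc.continuousOn hf0]
    exact my_ann ha hfc hf0 hx
  · intro x hx
    rw [← cfcₙ_eq_cfc hfc.continuousOn hf0]
    exact my_ann' ha hfc hf0 hx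

end helpers

set_option maxHeartbeats 1000000 in
/-- Almost mutually orthogonal projections in a unital C*-algebra can be
perturbed to exactly mutually orthogonal projections. -/
theorem stmt_4 (ε : ℝ) (hε : 0 < ε) (n : ℕ) :
    ∃ δ : ℝ, 0 < δ ∧
      ∀ (A : Type) [NormedRing A] [StarRing A] [CStarRing A]
        [NormedAlgebra ℂ A] [StarModule ℂ A] [CompleteSpace A],
        ∀ q : Fin n → A,
          (∀ i, IsSelfAdjoint (q i) ∧ q i ^ 2 = q i) →
          (∀ i j, i ≠ j → ‖q i * q j‖ < δ) →
          ∃ p : Fin n → A,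
            (∀ i, IsSelfAdjoint (p i) ∧ p i ^ 2 = p i) ∧
            (∀ i j, i ≠ j → p i * p j = 0) ∧
            (∀ i, ‖p i - q i‖ < ε) := by
  classical
  set M : ℝ := 36 * n + 1 with hM
  have hn0 : (0:ℝ) ≤ n := Nat.cast_nonneg n
  have hM1 : (1:ℝ) ≤ M := by rw [hM]; linarith
  have hMn : (0:ℝ) < M ^ n := by positivity
  set δ : ℝ := min ε 1 / (100 * (n + 1) * M ^ n) with hδ
  have hδ0 : 0 < δ := by
    apply div_pos (lt_min hε one_pos)
    positivity
  refine ⟨δ, hδ0, ?_⟩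
  intro A _ _ _ _ _ _ q hq hqδ
  letI : CStarAlgebra A := { }
  rcases subsingleton_or_nontrivial A with hA | hA
  · exact ⟨q, hq, fun i j _ => Subsingleton.elim _ _,
      fun i => by rw [Subsingleton.elim (q i - q i) 0] at *; simpa using hε⟩
  have hδM : M ^ n * δ = min ε 1 / (100 * (n + 1)) := by
    rw [hδ]
    field_simp
  have hδ0' : (0:ℝ) ≤ δ := hδ0.le
  have hq_norm : ∀ i, ‖q i‖ ≤ 1 := fun i => my_norm_le_one (hq i).1 (hq i).2
  have claim : ∀ k : ℕ, ∃ p : Fin n → A,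
      (∀ i : Fin n, (i:ℕ) < k →
        IsSelfAdjoint (p i) ∧ p i ^ 2 = p i ∧ ‖p i - q i‖ ≤ M ^ ((i:ℕ)+1) * δ) ∧
      (∀ i j : Fin n, (i:ℕ) < k → (j:ℕ) < k → i ≠ j → p i * p j = 0) := by
    intro k
    induction k with
    | zero => exact ⟨fun _ => 0, fun i hi => absurd hi (by omega), fun i j hi _ _ => absurd hi (by omega)⟩
    | succ k ih =>
      obtain ⟨p, hp1, hp2⟩ := ih
      by_cases hkn : k < n
      · set i₀ : Fin n := ⟨k, hkn⟩ with hi₀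
        set F := Finset.univ.filter (fun j : Fin n => (j:ℕ) < k) with hF
        have hFmem : ∀ j : Fin n, j ∈ F ↔ (j:ℕ) < k := by
          intro j; simp [hF]
        set s : A := ∑ j ∈ F, p j with hs
        have hs_sa : IsSelfAdjoint s := by
          rw [IsSelfAdjoint, hs, star_sum]
          exact Finset.sum_congr rfl fun j hj => ((hp1 j ((hFmem j).mp hj)).1).star_eq
        have hps : ∀ j : Fin n, (j:ℕ) < k → p j * s = p j := by
          intro j hj
          rw [hs, Finset.mul_sum, Finset.sum_eq_single j]
          · rw [← pow_two, (hp1 j hj).2.1]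
          · intro i hi hne
            exact hp2 j i hj ((hFmem i).mp hi) (Ne.symm hne)
          · intro hj'; exact absurd ((hFmem j).mpr hj) hj'
        have hsp : ∀ j : Fin n, (j:ℕ) < k → s * p j = p j := by
          intro j hj
          rw [hs, Finset.sum_mul, Finset.sum_eq_single j]
          · rw [← pow_two, (hp1 j hj).2.1]
          · intro i hi hne
            exact hp2 i j ((hFmem i).mp hi) hj hne
          · intro hj'; exact absurd ((hFmem j).mpr hj) hj'
        set e : A := 1 - s with he
        have he_sa : IsSelfAdjoint e := (IsSelfAdjoint.one (R := A)).sub hs_sa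
        have hss : s * s = s := by
          nth_rw 1 [hs]
          rw [Finset.sum_mul]
          exact Finset.sum_congr rfl fun j hj => hps j ((hFmem j).mp hj)
        have he_idem : e ^ 2 = e := by
          rw [pow_two, he, show (1 - s) * (1 - s) = 1 - s - s + s * s by noncomm_ring, hss]
          abel
        have hpe : ∀ j : Fin n, (j:ℕ) < k → p j * e = 0 := by
          intro j hj
          rw [he, mul_sub, mul_one, hps j hj, sub_self]
        have hep : ∀ j : Fin n, (j:ℕ) < k → e * p j = 0 := by
          intro j hj
          rw [he, sub_mul, one_mul, hsp j hj, sub_self]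
        have he_norm : ‖e‖ ≤ 1 := my_norm_le_one he_sa he_idem
        set a : A := e * q i₀ * e with ha
        have ha_sa : IsSelfAdjoint a := by
          rw [IsSelfAdjoint, ha]
          simp only [star_mul, he_sa.star_eq, (hq i₀).1.star_eq, mul_assoc]
        -- norm of s * q i₀
        have hcard : (F.card : ℝ) ≤ k := by
          have hc1 : F.card ≤ (Finset.range k).card := by
            refine Finset.card_le_card_of_injOn (fun j => (j:ℕ)) ?_ ?_
            · intro j hj; simp only [Finset.mem_coe, Finset.mem_range]; exact (hFmem j).mp hj
            · intro x _ y _ hxy; exact Fin.ext hxy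
          rw [Finset.card_range] at hc1
          exact_mod_cast hc1
        have hsq : ‖s * q i₀‖ ≤ (k:ℝ) * (M ^ k * δ + δ) := by
          rw [hs, Finset.sum_mul]
          refine le_trans (norm_sum_le _ _) ?_
          refine le_trans (Finset.sum_le_card_nsmul F _ (M ^ k * δ + δ) ?_) ?_
          · intro j hj
            have hjk := (hFmem j).mp hj
            have hne : j ≠ i₀ := by
              rw [Ne, Fin.ext_iff]
              show ¬ ((j:ℕ) = k)
              omega
            have h1 : ‖p j * q i₀‖ ≤ ‖(p j - q j) * q i₀‖ + ‖q j * q i₀‖ := by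
              have hdec : p j * q i₀ = (p j - q j) * q i₀ + q j * q i₀ := by noncomm_ring
              rw [hdec]; exact norm_add_le _ _
            have h2 : ‖(p j - q j) * q i₀‖ ≤ M ^ ((j:ℕ)+1) * δ * 1 := by
              refine le_trans (norm_mul_le _ _) ?_
              exact mul_le_mul (hp1 j hjk).2.2 (hq_norm i₀) (norm_nonneg _) (by positivity)
            have h3 : M ^ ((j:ℕ)+1) * δ ≤ M ^ k * δ := by
              apply mul_le_mul_of_nonneg_right _ hδ0'
              exact pow_le_pow_right₀ hM1 (by omega)
            have h4 := (hqδ j i₀ hne).le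
            rw [mul_one] at h2
            linarith
          · rw [nsmul_eq_mul]
            apply mul_le_mul_of_nonneg_right hcard
            positivity
        set u : ℝ := (k:ℝ) * (M ^ k * δ + δ) with hu
        have hu0 : 0 ≤ u := by positivity
        have hqs : ‖q i₀ * s‖ = ‖s * q i₀‖ := by
          rw [← norm_star, star_mul, hs_sa.star_eq, (hq i₀).1.star_eq]
        set m : ℝ := 2 * u with hm'
        have ht : ‖q i₀ - a‖ ≤ m := by
          have hdecomp : q i₀ - a = s * q i₀ + e * (q i₀ * s) := by
            rw [ha, he]; noncomm_ring
          rw [hdecomp]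
          refine le_trans (norm_add_le _ _) ?_
          have h5 : ‖e * (q i₀ * s)‖ ≤ ‖q i₀ * s‖ := by
            refine le_trans (norm_mul_le _ _) ?_
            exact mul_le_of_le_one_left (norm_nonneg _) he_norm
          rw [hm', hu]
          have := hqs
          linarith [hsq, h5, hqs.le, hqs.ge]
        -- numeric bounds on m
        have hMk_le : M ^ k ≤ M ^ n := pow_le_pow_right₀ hM1 hkn.le
        have hδle : δ ≤ M ^ k * δ := le_mul_of_one_le_left hδ0' (one_le_pow₀ hM1)
        have hkn' : (k:ℝ) ≤ n := by exact_mod_cast hkn.le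
        have hm4 : m ≤ 4 * n * (M ^ k * δ) := by
          rw [hm', hu]
          nlinarith [mul_le_mul_of_nonneg_right hkn' (by positivity : (0:ℝ) ≤ M ^ k * δ + δ)]
        have hmin1 : min ε 1 ≤ 1 := min_le_right ε 1
        have hm25 : m ≤ 1 / 25 := by
          have h6 : 4 * (n:ℝ) * (M ^ k * δ) ≤ 4 * n * (M ^ n * δ) := by
            nlinarith [mul_le_mul_of_nonneg_right hMk_le hδ0']
          have h7 : 4 * (n:ℝ) * (M ^ n * δ) ≤ 1 / 25 := by
            rw [hδM]
            have hpos : (0:ℝ) < 100 * ((n:ℝ) + 1) := by positivity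
            rw [show (4:ℝ) * n * (min ε 1 / (100 * ((n:ℝ) + 1)))
                = (4 * n * min ε 1) / (100 * ((n:ℝ) + 1)) from by ring]
            rw [div_le_div_iff₀ hpos (by norm_num : (0:ℝ) < 25)]
            have hmin0 : 0 ≤ min ε 1 := le_min hε.le zero_le_one
            nlinarith
          linarith
        have hm0 : 0 ≤ m := by rw [hm']; linarith
        have ha_norm : ‖a‖ ≤ 1 + m := by
          have h8 : ‖a‖ ≤ ‖q i₀‖ + ‖q i₀ - a‖ := by
            calc ‖a‖ = ‖q i₀ - (q i₀ - a)‖ := by rw [sub_sub_cancel]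
              _ ≤ ‖q i₀‖ + ‖q i₀ - a‖ := norm_sub_le _ _
          linarith [hq_norm i₀, ht]
        have hasq : ‖a ^ 2 - a‖ ≤ 4 * m := by
          have hq2 := (hq i₀).2
          have hqq : q i₀ * q i₀ = q i₀ := by rw [← pow_two, hq2]
          have hd : a ^ 2 - a = (a * (a - q i₀) + (a - q i₀) * q i₀) + (q i₀ - a) := by
            have hexp : (a * (a - q i₀) + (a - q i₀) * q i₀) + (q i₀ - a)
                = a * a - q i₀ * q i₀ + (q i₀ - a) := by noncomm_ring
            rw [hexp, hqq, pow_two]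
            abel
          rw [hd]
          have h9 : ‖a - q i₀‖ = ‖q i₀ - a‖ := norm_sub_rev _ _
          have h10 : ‖a * (a - q i₀)‖ ≤ (1 + m) * m := by
            refine le_trans (norm_mul_le _ _) ?_
            exact mul_le_mul ha_norm (by rw [h9]; exact ht) (norm_nonneg _) (by linarith)
          have h11 : ‖(a - q i₀) * q i₀‖ ≤ m * 1 := by
            refine le_trans (norm_mul_le _ _) ?_
            exact mul_le_mul (by rw [h9]; exact ht) (hq_norm i₀) (norm_nonneg _) hm0
          refine le_trans (norm_add_le _ _) ?_
          refine le_trans (add_le_add (norm_add_le _ _) le_rfl) ?_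
          nlinarith [ht]
        have hlt : ‖a ^ 2 - a‖ < 1 / 4 := by linarith
        obtain ⟨P, hP_sa, hP_idem, hP_norm, hPl, hPr⟩ := my_exists_proj ha_sa hlt
        have hPq : ‖P - q i₀‖ ≤ 9 * m := by
          have hPd : P - q i₀ = (P - a) - (q i₀ - a) := by abel
          rw [hPd]
          refine le_trans (norm_sub_le _ _) ?_
          linarith [hP_norm, hasq, ht]
        have h9m : 9 * m ≤ M ^ (k+1) * δ := by
          have h36 : 36 * (n:ℝ) ≤ M := by rw [hM]; linarith
          have hMkδ : (0:ℝ) ≤ M ^ k * δ := by positivity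
          calc 9 * m ≤ 36 * (n:ℝ) * (M ^ k * δ) := by linarith
            _ ≤ M * (M ^ k * δ) := mul_le_mul_of_nonneg_right h36 hMkδ
            _ = M ^ (k+1) * δ := by rw [pow_succ]; ring
        have horth : ∀ j : Fin n, (j:ℕ) < k → P * p j = 0 ∧ p j * P = 0 := by
          intro j hj
          have hja : p j * a = 0 := by
            rw [ha]
            simp only [← mul_assoc]
            rw [hpe j hj, zero_mul, zero_mul]
          have haj : a * p j = 0 := by
            rw [ha]
            simp only [mul_assoc]
            rw [hep j hj, mul_zero, mul_zero]
          exact ⟨hPr (p j) haj, hPl (p j) hja⟩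
        refine ⟨Function.update p i₀ P, ?_, ?_⟩
        · intro i hi
          by_cases hik : (i:ℕ) < k
          · have hne : i ≠ i₀ := by
              rw [Ne, Fin.ext_iff]; show ¬ ((i:ℕ) = k); omega
            rw [Function.update_of_ne hne]
            exact hp1 i hik
          · have hieq : i = i₀ := by
              apply Fin.ext; show (i:ℕ) = k; omega
            rw [hieq, Function.update_self]
            refine ⟨hP_sa, hP_idem, ?_⟩
            have : (i₀ : ℕ) = k := rfl
            rw [this]
            linarith [hPq, h9m]
        · intro i j hi hj hij
          by_cases hik : (i:ℕ) < k <;> by_cases hjk : (j:ℕ) < k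
          · have hni : i ≠ i₀ := by rw [Ne, Fin.ext_iff]; show ¬ ((i:ℕ) = k); omega
            have hnj : j ≠ i₀ := by rw [Ne, Fin.ext_iff]; show ¬ ((j:ℕ) = k); omega
            rw [Function.update_of_ne hni, Function.update_of_ne hnj]
            exact hp2 i j hik hjk hij
          · have hni : i ≠ i₀ := by rw [Ne, Fin.ext_iff]; show ¬ ((i:ℕ) = k); omega
            have hjeq : j = i₀ := by apply Fin.ext; show (j:ℕ) = k; omega
            rw [Function.update_of_ne hni, hjeq, Function.update_self]
            exact (horth i hik).2
          · have hieq : i = i₀ := by apply Fin.ext; show (i:ℕ) = k; omega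
            have hnj : j ≠ i₀ := by rw [Ne, Fin.ext_iff]; show ¬ ((j:ℕ) = k); omega
            rw [Function.update_of_ne hnj, hieq, Function.update_self]
            exact (horth j hjk).1
          · exfalso
            have hieq : i = i₀ := by apply Fin.ext; show (i:ℕ) = k; omega
            have hjeq : j = i₀ := by apply Fin.ext; show (j:ℕ) = k; omega
            exact hij (hieq.trans hjeq.symm)
      · exact ⟨p, fun i hi => hp1 i (by have := i.isLt; omega),
          fun i j hi hj hij => hp2 i j (by have := i.isLt; omega) (by have := j.isLt; omega) hij⟩
  obtain ⟨p, hp1, hp2⟩ := claim n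
  refine ⟨p, fun i => ⟨(hp1 i i.isLt).1, (hp1 i i.isLt).2.1⟩,
    fun i j hij => hp2 i j i.isLt j.isLt hij, fun i => ?_⟩
  refine lt_of_le_of_lt (hp1 i i.isLt).2.2 ?_
  have h1 : M ^ ((i:ℕ)+1) * δ ≤ M ^ n * δ := by
    apply mul_le_mul_of_nonneg_right _ hδ0'
    exact pow_le_pow_right₀ hM1 i.isLt
  have h2 : min ε 1 / (100 * ((n:ℝ) + 1)) < ε := by
    have hmin : min ε 1 ≤ ε := min_le_left ε 1
    have : (1:ℝ) < 100 * ((n:ℝ) + 1) := by nlinarith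
    calc min ε 1 / (100 * ((n:ℝ) + 1)) < min ε 1 / 1 := by
          apply div_lt_div_of_pos_left (lt_min hε one_pos) (by linarith) this
      _ = min ε 1 := div_one _
      _ ≤ ε := hmin
  rw [hδM] at h1
  linarith
end

section
/- Let ε > 0, let N, N' ∈ ℕ be positive, let {e_{i,j} : 1 ≤ i, j ≤ N} be the standard matrix units of M_N, and let x ∈ M_N ⊗ M_{N'} (realized as complex matrices indexed by (Fin N × Fin N') via the Kronecker product) satisfy ‖x(e_{i,j} ⊗ 1_{N'}) − (e_{i,j} ⊗ 1_{N'})x‖ < ε for all 1 ≤ i, j ≤ N. Then there exists a matrix b ∈ M_{N'} such that ‖x − 1_N ⊗ b‖ < 10 N³ ε. -/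
open scoped Matrix.Norms.L2Operator Kronecker

namespace Stmt5

open Matrix

variable {N N' : ℕ}

/-- The matrix unit `e_{i,j} ⊗ 1`. -/
def E (N' : ℕ) (i j : Fin N) : Matrix (Fin N × Fin N') (Fin N × Fin N') ℂ :=
  Matrix.single i j (1 : ℂ) ⊗ₖ (1 : Matrix (Fin N') (Fin N') ℂ)

lemma E_def (i j : Fin N) :
    E N' i j = Matrix.single i j (1 : ℂ) ⊗ₖ (1 : Matrix (Fin N') (Fin N') ℂ) := rfl

lemma E_mul_E (i j l : Fin N) : E N' i j * E N' j l = E N' i l := by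
  rw [E, E, E, ← Matrix.mul_kronecker_mul, one_mul, Matrix.single_mul_single_same, one_mul]

lemma E_mul_E_ne {j k : Fin N} (h : j ≠ k) (i l : Fin N) : E N' i j * E N' k l = 0 := by
  rw [E, E, ← Matrix.mul_kronecker_mul, Matrix.single_mul_single_of_ne (c := (1:ℂ)) i j k h,
    Matrix.zero_kronecker]

lemma E_conjTranspose (i j : Fin N) : (E N' i j)ᴴ = E N' j i := by
  ext ⟨p, a⟩ ⟨q, b⟩
  simp [E, Matrix.conjTranspose_apply, Matrix.kroneckerMap_apply, Matrix.single,
    Matrix.one_apply, and_comm, eq_comm]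
  aesop

lemma norm_E_sq (i j : Fin N) : ‖E N' i j‖ * ‖E N' i j‖ = ‖E N' j j‖ := by
  rw [← Matrix.l2_opNorm_conjTranspose_mul_self, E_conjTranspose, E_mul_E]

lemma norm_E_le_one (i j : Fin N) : ‖E N' i j‖ ≤ 1 := by
  have h1 := norm_E_sq (N' := N') i j
  have h2 := norm_E_sq (N' := N') j j
  have h3 : (0:ℝ) ≤ ‖E N' i j‖ := norm_nonneg _
  have h4 : (0:ℝ) ≤ ‖E N' j j‖ := norm_nonneg _
  have ht : ‖E N' j j‖ ≤ 1 := by nlinarith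
  nlinarith

lemma sum_E : ∑ k : Fin N, E N' k k = 1 := by
  ext ⟨p, a⟩ ⟨q, b⟩
  simp only [Matrix.sum_apply, E, Matrix.kroneckerMap_apply, Matrix.single,
    Matrix.one_apply, Matrix.of_apply, ite_mul, one_mul, zero_mul, Prod.mk.injEq, ite_and]
  rw [Finset.sum_ite_eq' Finset.univ p]
  by_cases hpq : p = q <;> aesop

lemma sum_std : ∑ k : Fin N, Matrix.single k k (1:ℂ) = 1 := by
  ext p q
  simp only [Matrix.sum_apply, Matrix.single, Matrix.of_apply, Matrix.one_apply, ite_and]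
  rw [Finset.sum_ite_eq' Finset.univ p]
  by_cases hpq : p = q <;> aesop

lemma sum_kron {ι : Type*} (s : Finset ι) (A : ι → Matrix (Fin N) (Fin N) ℂ)
    (B : Matrix (Fin N') (Fin N') ℂ) :
    (∑ i ∈ s, A i) ⊗ₖ B = ∑ i ∈ s, A i ⊗ₖ B := by
  ext ⟨p, a⟩ ⟨q, c⟩
  simp [Matrix.kroneckerMap_apply, Matrix.sum_apply, Finset.sum_mul]

lemma compress (x : Matrix (Fin N × Fin N') (Fin N × Fin N') ℂ) (i0 : Fin N) :
    E N' i0 i0 * x * E N' i0 i0 =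
      Matrix.single i0 i0 (1:ℂ) ⊗ₖ (Matrix.of fun a b => x (i0, a) (i0, b)) := by
  ext ⟨p, a⟩ ⟨q, b⟩
  simp only [Matrix.mul_apply, E, kroneckerMap_apply, single, of_apply, one_apply,
    Fintype.sum_prod_type, ite_mul, mul_ite, one_mul, mul_one, zero_mul, mul_zero,
    Prod.mk.injEq, ite_and]
  simp [Finset.sum_ite_eq, Finset.sum_ite_eq']
  by_cases h1 : i0 = p <;> by_cases h2 : i0 = q <;> aesop

lemma norm_sandwich {ε : ℝ} (A C B : Matrix (Fin N × Fin N') (Fin N × Fin N') ℂ)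
    (hA : ‖A‖ ≤ 1) (hB : ‖B‖ ≤ 1) (hC : ‖C‖ ≤ ε) : ‖A * C * B‖ ≤ ε := by
  have h1 := Matrix.l2_opNorm_mul (A * C) B
  have h2 := Matrix.l2_opNorm_mul A C
  have h3 : (0:ℝ) ≤ ‖A‖ := norm_nonneg _
  have h4 : (0:ℝ) ≤ ‖B‖ := norm_nonneg _
  have h5 : (0:ℝ) ≤ ‖C‖ := norm_nonneg _
  have h6 : (0:ℝ) ≤ ‖A * C‖ := norm_nonneg _
  nlinarith

end Stmt5

open Stmt5

/-- An element of `M_N ⊗ M_{N'}` that almost commutes with the matrix units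
of the first factor is close to an element of the form `1_N ⊗ b`. -/
theorem stmt_5 (ε : ℝ) (hε : 0 < ε) (N N' : ℕ) (hN : 0 < N) (hN' : 0 < N')
    (x : Matrix (Fin N × Fin N') (Fin N × Fin N') ℂ)
    (hx : ∀ i j : Fin N,
      ‖x * (Matrix.single i j (1 : ℂ) ⊗ₖ (1 : Matrix (Fin N') (Fin N') ℂ)) -
        (Matrix.single i j (1 : ℂ) ⊗ₖ (1 : Matrix (Fin N') (Fin N') ℂ)) * x‖ < ε) :
    ∃ b : Matrix (Fin N') (Fin N') ℂ,
      ‖x - (1 : Matrix (Fin N) (Fin N) ℂ) ⊗ₖ b‖ < 10 * (N : ℝ) ^ 3 * ε := by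
  classical
  have hxE : ∀ i j : Fin N, ‖x * E N' i j - E N' i j * x‖ < ε := by
    intro i j; rw [E_def]; exact hx i j
  set i0 : Fin N := ⟨0, hN⟩ with hi0
  set b : Matrix (Fin N') (Fin N') ℂ := Matrix.of fun a c => x (i0, a) (i0, c) with hb
  refine ⟨b, ?_⟩
  -- each compressed corner equals `e_{kk} ⊗ b`
  have key2 : ∀ k : Fin N,
      E N' k i0 * x * E N' i0 k = Matrix.single k k (1:ℂ) ⊗ₖ b := by
    intro k
    have a1 : E N' k i0 * E N' i0 i0 = E N' k i0 := E_mul_E k i0 i0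
    have a2 : E N' i0 i0 * E N' i0 k = E N' i0 k := E_mul_E i0 i0 k
    calc E N' k i0 * x * E N' i0 k
        = (E N' k i0 * E N' i0 i0) * x * (E N' i0 i0 * E N' i0 k) := by rw [a1, a2]
      _ = E N' k i0 * (E N' i0 i0 * x * E N' i0 i0) * E N' i0 k := by noncomm_ring
      _ = E N' k i0 * (Matrix.single i0 i0 (1:ℂ) ⊗ₖ b) * E N' i0 k := by
          rw [compress]
      _ = Matrix.single k k (1:ℂ) ⊗ₖ b := by
          rw [E_def, E_def, ← Matrix.mul_kronecker_mul, ← Matrix.mul_kronecker_mul]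
          simp
  have key3 : (1 : Matrix (Fin N) (Fin N) ℂ) ⊗ₖ b
      = ∑ k : Fin N, E N' k i0 * x * E N' i0 k := by
    simp_rw [key2]
    rw [show (1 : Matrix (Fin N) (Fin N) ℂ) = ∑ k : Fin N, Matrix.single k k (1:ℂ)
      from sum_std.symm, sum_kron]
  have hxid : (∑ k : Fin N, ∑ l : Fin N, E N' k k * x * E N' l l) = x := by
    calc ∑ k : Fin N, ∑ l : Fin N, E N' k k * x * E N' l l
        = ∑ k : Fin N, (E N' k k * x) * (∑ l : Fin N, E N' l l) := by
          refine Finset.sum_congr rfl fun k _ => ?_; rw [Finset.mul_sum]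
      _ = (∑ k : Fin N, E N' k k * x) * (∑ l : Fin N, E N' l l) := by rw [← Finset.sum_mul]
      _ = ((∑ k : Fin N, E N' k k) * x) * (∑ l : Fin N, E N' l l) := by rw [← Finset.sum_mul]
      _ = x := by rw [sum_E, one_mul, mul_one]
  set T : Fin N → Fin N → Matrix (Fin N × Fin N') (Fin N × Fin N') ℂ := fun k l =>
    E N' k k * x * E N' l l - if l = k then E N' k i0 * x * E N' i0 k else 0 with hT
  have main : x - (1 : Matrix (Fin N) (Fin N) ℂ) ⊗ₖ b = ∑ k : Fin N, ∑ l : Fin N, T k l := by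
    have h2 : (∑ k : Fin N, ∑ l : Fin N, T k l)
        = (∑ k : Fin N, ∑ l : Fin N, E N' k k * x * E N' l l)
          - ∑ k : Fin N, E N' k i0 * x * E N' i0 k := by
      rw [← Finset.sum_sub_distrib]
      refine Finset.sum_congr rfl fun k _ => ?_
      simp only [hT]
      rw [Finset.sum_sub_distrib, Finset.sum_ite_eq' Finset.univ k, if_pos (Finset.mem_univ k)]
    rw [h2, hxid, ← key3]
  have hTnorm : ∀ k l : Fin N, ‖T k l‖ ≤ ε := by
    intro k l
    by_cases h : l = k
    · subst h
      have a1 : E N' l i0 * E N' i0 l = E N' l l := E_mul_E l i0 l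
      have a2 : E N' i0 l * E N' l i0 = E N' i0 i0 := E_mul_E i0 l i0
      have a3 : E N' i0 i0 * E N' i0 l = E N' i0 l := E_mul_E i0 i0 l
      have e1 : T l l = E N' l i0 * ((E N' i0 l * x - x * E N' i0 l) * E N' l i0) * E N' i0 l := by
        have expand : E N' l i0 * ((E N' i0 l * x - x * E N' i0 l) * E N' l i0) * E N' i0 l
            = (E N' l i0 * E N' i0 l) * x * (E N' l i0 * E N' i0 l)
              - E N' l i0 * x * ((E N' i0 l * E N' l i0) * E N' i0 l) := by noncomm_ring
        rw [expand, a1, a2, a3, hT]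
        simp
      rw [e1]
      refine norm_sandwich _ _ _ (norm_E_le_one l i0) (norm_E_le_one i0 l) ?_
      calc ‖(E N' i0 l * x - x * E N' i0 l) * E N' l i0‖
          ≤ ‖E N' i0 l * x - x * E N' i0 l‖ * ‖E N' l i0‖ := Matrix.l2_opNorm_mul _ _
        _ ≤ ‖E N' i0 l * x - x * E N' i0 l‖ * 1 := by
            exact mul_le_mul_of_nonneg_left (norm_E_le_one l i0) (norm_nonneg _)
        _ = ‖-(x * E N' i0 l - E N' i0 l * x)‖ := by rw [mul_one, neg_sub]
        _ = ‖x * E N' i0 l - E N' i0 l * x‖ := norm_neg _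
        _ ≤ ε := (hxE i0 l).le
    · have hz : E N' k k * E N' l l = 0 := E_mul_E_ne (fun hkl => h hkl.symm) k l
      have e1 : T k l = E N' k k * (x * E N' l l - E N' l l * x) := by
        have expand : E N' k k * (x * E N' l l - E N' l l * x)
            = E N' k k * x * E N' l l - (E N' k k * E N' l l) * x := by noncomm_ring
        rw [expand, hz, zero_mul, hT]
        simp [h]
      rw [e1]
      calc ‖E N' k k * (x * E N' l l - E N' l l * x)‖
          ≤ ‖E N' k k‖ * ‖x * E N' l l - E N' l l * x‖ := Matrix.l2_opNorm_mul _ _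
        _ ≤ 1 * ‖x * E N' l l - E N' l l * x‖ := by
            exact mul_le_mul_of_nonneg_right (norm_E_le_one k k) (norm_nonneg _)
        _ ≤ ε := by rw [one_mul]; exact (hxE l l).le
  have hsum : ‖x - (1 : Matrix (Fin N) (Fin N) ℂ) ⊗ₖ b‖ ≤ (N : ℝ) * ((N : ℝ) * ε) := by
    rw [main]
    calc ‖∑ k : Fin N, ∑ l : Fin N, T k l‖
        ≤ ∑ k : Fin N, ‖∑ l : Fin N, T k l‖ := norm_sum_le _ _
      _ ≤ ∑ k : Fin N, ∑ l : Fin N, ‖T k l‖ :=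
          Finset.sum_le_sum fun k _ => norm_sum_le _ _
      _ ≤ ∑ _k : Fin N, ∑ _l : Fin N, ε :=
          Finset.sum_le_sum fun k _ => Finset.sum_le_sum fun l _ => hTnorm k l
      _ = (N : ℝ) * ((N : ℝ) * ε) := by simp [Finset.sum_const, nsmul_eq_mul]
  have hN1 : (1:ℝ) ≤ (N:ℝ) := by exact_mod_cast hN
  have h0 : (0:ℝ) < (N:ℝ) := by exact_mod_cast hN
  have hp : (N:ℝ) ^ 3 = (N:ℝ) * (N:ℝ) * (N:ℝ) := by ring
  have hfin : (N : ℝ) * ((N : ℝ) * ε) < 10 * (N : ℝ) ^ 3 * ε := by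
    nlinarith [mul_pos (mul_pos h0 h0) hε, mul_pos h0 (mul_pos h0 hε)]
  linarith
end

section
/- For every integer k ≥ 1 there exists δ > 0 with the following property: for every positive integer N, every unitary u ∈ M_N with u^k = 1, and all nonzero mutually orthogonal projections p_1, …, p_k ∈ M_N satisfying ‖u p_i u* − p_{i+1}‖ < δ for 1 ≤ i ≤ k (with the convention p_{k+1} = p_1), every k-th root of unity e^{2πij/k} (0 ≤ j ≤ k−1) is an eigenvalue of u; that is, for each such j there exists a nonzero vector w ∈ ℂ^N with u·w = e^{2πij/k}·w. -/
open Matrix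
open scoped Matrix.Norms.L2Operator
open Fin.NatCast

set_option maxHeartbeats 1600000 in
/-- For every `k ≥ 1` there is `δ > 0` such that any unitary `u` of order
dividing `k` that approximately cyclically permutes `k` nonzero mutually orthogonal
projections (within `δ`) has every `k`-th root of unity `e^{2πij/k}` as an eigenvalue. -/
theorem stmt_10 (k : ℕ) [NeZero k] :
    ∃ δ : ℝ, 0 < δ ∧
      ∀ (N : ℕ), 0 < N →
        ∀ u : Matrix (Fin N) (Fin N) ℂ, u ∈ Matrix.unitaryGroup (Fin N) ℂ → u ^ k = 1 →
          ∀ p : Fin k → Matrix (Fin N) (Fin N) ℂ,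
            (∀ i, p i ≠ 0 ∧ (p i)ᴴ = p i ∧ p i * p i = p i) →
            (∀ i j, i ≠ j → p i * p j = 0) →
            (∀ i : Fin k, ‖u * p i * uᴴ - p (i + 1)‖ < δ) →
            ∀ j : Fin k, ∃ w : Fin N → ℂ, w ≠ 0 ∧
              u.mulVec w =
                Complex.exp (2 * Real.pi * Complex.I * (j : ℕ) / (k : ℕ)) • w := by
  classical
  have hkpos : (0:ℝ) < (k:ℝ) := by
    exact_mod_cast Nat.pos_of_ne_zero (NeZero.ne k)
  have hk0 : (k:ℝ) ≠ 0 := ne_of_gt hkpos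
  refine ⟨(2 * (k:ℝ)^2)⁻¹, by positivity, ?_⟩
  set δ : ℝ := (2 * (k:ℝ)^2)⁻¹ with hδdef
  have hδpos : 0 < δ := by positivity
  intro N hN u hu huk p hp horth hδ j
  haveI : Nonempty (Fin N) := Fin.pos_iff_nonempty.mp hN
  -- unitarity facts
  have hu1 : uᴴ * u = 1 := by
    have := Matrix.mem_unitaryGroup_iff'.mp hu
    rwa [Matrix.star_eq_conjTranspose] at this
  have hpow : ∀ m : ℕ, (uᴴ)^m * u^m = 1 := by
    intro m
    induction m with
    | zero => simp
    | succ m ih =>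
      rw [pow_succ, pow_succ']
      calc (uᴴ)^m * uᴴ * (u * u^m) = (uᴴ)^m * (uᴴ * u) * u^m := by
            simp [mul_assoc]
        _ = 1 := by rw [hu1, mul_one, ih]
  have hnorm_one : ‖(1 : Matrix (Fin N) (Fin N) ℂ)‖ = 1 := by
    rw [Matrix.cstar_norm_def, _root_.map_one]
    exact ContinuousLinearMap.norm_id
  have hum : ∀ m : ℕ, ‖u ^ m‖ = 1 := by
    intro m
    have h1 : ‖(u^m)ᴴ * (u^m)‖ = ‖u^m‖ * ‖u^m‖ :=
      Matrix.l2_opNorm_conjTranspose_mul_self _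
    rw [Matrix.conjTranspose_pow, hpow m, hnorm_one] at h1
    nlinarith [norm_nonneg (u^m)]
  have hu1' : ‖u‖ = 1 := by simpa using hum 1
  have huconj : ‖uᴴ‖ = 1 := by rw [Matrix.l2_opNorm_conjTranspose, hu1']
  have hp0norm : ‖p 0‖ ≤ 1 := by
    have h1 : ‖(p 0)ᴴ * (p 0)‖ = ‖p 0‖ * ‖p 0‖ :=
      Matrix.l2_opNorm_conjTranspose_mul_self _
    rw [(hp 0).2.1, (hp 0).2.2] at h1
    nlinarith [norm_nonneg (p 0)]
  -- telescoping estimate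
  have key : ∀ m : ℕ, ‖u^m * p 0 * (uᴴ)^m - p ((m : ℕ) : Fin k)‖ ≤ m * δ := by
    intro m
    induction m with
    | zero => simp
    | succ m ih =>
      have hcast : ((m+1 : ℕ) : Fin k) = ((m : ℕ) : Fin k) + 1 := by
        push_cast; ring
      have heq : u^(m+1) * p 0 * (uᴴ)^(m+1) - p ((m+1 : ℕ) : Fin k)
          = u * (u^m * p 0 * (uᴴ)^m - p ((m : ℕ) : Fin k)) * uᴴ
            + (u * p ((m : ℕ) : Fin k) * uᴴ - p (((m : ℕ) : Fin k) + 1)) := by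
        rw [hcast, pow_succ', pow_succ]
        noncomm_ring
      rw [heq]
      have hb1 : ‖u * (u^m * p 0 * (uᴴ)^m - p ((m : ℕ) : Fin k)) * uᴴ‖ ≤ (m : ℝ) * δ := by
        calc ‖u * (u^m * p 0 * (uᴴ)^m - p ((m : ℕ) : Fin k)) * uᴴ‖
            ≤ ‖u * (u^m * p 0 * (uᴴ)^m - p ((m : ℕ) : Fin k))‖ * ‖uᴴ‖ := norm_mul_le _ _
          _ ≤ ‖u‖ * ‖u^m * p 0 * (uᴴ)^m - p ((m : ℕ) : Fin k)‖ * ‖uᴴ‖ := by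
              gcongr; exact norm_mul_le _ _
          _ = ‖u^m * p 0 * (uᴴ)^m - p ((m : ℕ) : Fin k)‖ := by
              rw [hu1', huconj, one_mul, mul_one]
          _ ≤ (m : ℝ) * δ := ih
      have hb2 := le_of_lt (hδ ((m : ℕ) : Fin k))
      calc ‖_ + _‖ ≤ _ := norm_add_le _ _
        _ ≤ (m : ℝ) * δ + δ := add_le_add hb1 hb2
        _ = ((m+1 : ℕ) : ℝ) * δ := by push_cast; ring
  -- bound on compressed powers
  have hB : ∀ m : ℕ, m ≠ 0 → m < k → ‖p 0 * u ^ m * p 0‖ ≤ (m : ℝ) * δ := by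
    intro m hm0 hmk
    have hne : (0 : Fin k) ≠ ((m : ℕ) : Fin k) := by
      intro h
      apply hm0
      have := congrArg Fin.val h
      rw [Fin.val_zero, Fin.val_cast_of_lt hmk] at this
      exact this.symm
    have h0 : p 0 * p ((m : ℕ) : Fin k) = 0 := horth 0 _ hne
    have h1 : p 0 * u ^ m * p 0
        = p 0 * (u^m * p 0 * (uᴴ)^m - p ((m : ℕ) : Fin k)) * (u ^ m * p 0) := by
      have hstep : p 0 * (u ^ m * p 0 * (uᴴ)^m - p ((m : ℕ) : Fin k)) * (u ^ m * p 0)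
          = p 0 * u ^ m * (p 0 * ((uᴴ)^m * u ^ m) * p 0)
            - p 0 * p ((m : ℕ) : Fin k) * (u ^ m * p 0) := by
        noncomm_ring
      rw [hstep, hpow m, h0, zero_mul, sub_zero, mul_one, (hp 0).2.2]
    rw [h1]
    have hmδ0 : (0:ℝ) ≤ (m : ℝ) * δ := mul_nonneg (Nat.cast_nonneg m) hδpos.le
    have hA : ‖p 0 * (u^m * p 0 * (uᴴ)^m - p ((m : ℕ) : Fin k))‖ ≤ (m : ℝ) * δ := by
      refine le_trans (norm_mul_le _ _) ?_
      calc ‖p 0‖ * ‖u^m * p 0 * (uᴴ)^m - p ((m : ℕ) : Fin k)‖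
          ≤ 1 * ((m : ℝ) * δ) := mul_le_mul hp0norm (key m) (norm_nonneg _) zero_le_one
        _ = (m : ℝ) * δ := one_mul _
    have hBn : ‖u ^ m * p 0‖ ≤ 1 := by
      refine le_trans (norm_mul_le _ _) ?_
      rw [hum m, one_mul]; exact hp0norm
    refine le_trans (norm_mul_le _ _) ?_
    calc ‖p 0 * (u^m * p 0 * (uᴴ)^m - p ((m : ℕ) : Fin k))‖ * ‖u ^ m * p 0‖
        ≤ ((m : ℝ) * δ) * 1 := mul_le_mul hA hBn (norm_nonneg _) hmδ0
      _ = (m : ℝ) * δ := mul_one _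
  -- vector setup
  set L := (WithLp.linearEquiv 2 ℂ (Fin N → ℂ)).symm with hLdef
  have hAx : ∀ (A : Matrix (Fin N) (Fin N) ℂ) (x : Fin N → ℂ),
      ‖L (A *ᵥ x)‖ ≤ ‖A‖ * ‖L x‖ := fun A x => A.l2_opNorm_mulVec (L x)
  obtain ⟨v, hv⟩ : ∃ v : Fin N → ℂ, p 0 *ᵥ v ≠ 0 := by
    by_contra h
    push_neg at h
    refine (hp 0).1 ?_
    ext i j'
    simpa using congrFun (h (Pi.single j' 1)) i
  set ξ : Fin N → ℂ := p 0 *ᵥ v with hξdef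
  have hpξ : p 0 *ᵥ ξ = ξ := by rw [hξdef, Matrix.mulVec_mulVec, (hp 0).2.2]
  have hξpos : 0 < ‖L ξ‖ :=
    norm_pos_iff.mpr fun h => hv (L.map_eq_zero_iff.mp h)
  set c : ℂ := Complex.exp (2 * Real.pi * Complex.I * (j : ℕ) / (k : ℕ)) with hcdef
  have hc0 : c ≠ 0 := Complex.exp_ne_zero _
  have hck : c ^ k = 1 := by
    rw [hcdef, ← Complex.exp_nat_mul]
    have harg : (k:ℂ) * (2 * Real.pi * Complex.I * (j : ℕ) / (k : ℕ))
        = (((j:ℕ) : ℤ) : ℂ) * (2 * Real.pi * Complex.I) := by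
      have : ((k:ℕ):ℂ) ≠ 0 := Nat.cast_ne_zero.mpr (NeZero.ne k)
      push_cast
      field_simp
    rw [harg]
    exact Complex.exp_int_mul_two_pi_mul_I _
  have hcabs : ‖c‖ = 1 := by
    have hcc : c = Complex.exp (((2 * Real.pi * (j:ℕ) / (k:ℕ) : ℝ) : ℂ) * Complex.I) := by
      rw [hcdef]; congr 1; push_cast; ring
    rw [hcc, Complex.norm_exp_ofReal_mul_I]
  set a : ℂ := c⁻¹ with hadef
  have hca : c * a = 1 := mul_inv_cancel₀ hc0
  have hak : a ^ k = 1 := by rw [hadef, inv_pow, hck, inv_one]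
  have haabs : ‖a‖ = 1 := by rw [hadef, norm_inv, hcabs, inv_one]
  obtain ⟨n, hn⟩ : ∃ n, k = n + 1 :=
    ⟨k - 1, (Nat.succ_pred_eq_of_pos (Nat.pos_of_ne_zero (NeZero.ne k))).symm⟩
  have hnk : (n : ℝ) ≤ (k : ℝ) := by exact_mod_cast (by omega : n ≤ k)
  have hrange : Finset.range k = Finset.range (n+1) := by rw [hn]
  set w : Fin N → ℂ := ∑ m ∈ Finset.range k, a ^ m • ((u ^ m) *ᵥ ξ) with hwdef
  have hPw : p 0 *ᵥ w
      = (∑ m ∈ Finset.range n, a ^ (m+1) • ((p 0 * u ^ (m+1) * p 0) *ᵥ ξ)) + ξ := by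
    have hfix : ∀ A : Matrix (Fin N) (Fin N) ℂ, A *ᵥ ξ = (A * p 0) *ᵥ ξ := by
      intro A
      conv_lhs => rw [← hpξ]
      rw [Matrix.mulVec_mulVec]
    rw [hwdef, hrange, ← Matrix.mulVecLin_apply, _root_.map_sum,
      Finset.sum_range_succ' (fun m => (p 0).mulVecLin (a ^ m • ((u ^ m) *ᵥ ξ))) n]
    congr 1
    · refine Finset.sum_congr rfl fun m _ => ?_
      rw [_root_.map_smul, Matrix.mulVecLin_apply, Matrix.mulVec_mulVec, hfix (p 0 * u ^ (m+1))]
    · simp [hpξ]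
  have hbound : ‖L (∑ m ∈ Finset.range n, a ^ (m+1) • ((p 0 * u ^ (m+1) * p 0) *ᵥ ξ))‖
      ≤ (1/2) * ‖L ξ‖ := by
    rw [_root_.map_sum]
    refine le_trans (norm_sum_le _ _) ?_
    have hterm : ∀ m ∈ Finset.range n,
        ‖L (a ^ (m+1) • ((p 0 * u ^ (m+1) * p 0) *ᵥ ξ))‖ ≤ (k : ℝ) * δ * ‖L ξ‖ := by
      intro m hm
      rw [_root_.map_smul, norm_smul, norm_pow, haabs, one_pow, one_mul]
      refine le_trans (hAx _ _) ?_
      have hmlt : m + 1 < k := by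
        rw [hn]; exact Nat.succ_lt_succ (Finset.mem_range.mp hm)
      have h1 : ‖p 0 * u ^ (m+1) * p 0‖ ≤ ((m+1 : ℕ) : ℝ) * δ :=
        hB (m+1) (Nat.succ_ne_zero m) hmlt
      have h2 : ((m+1 : ℕ) : ℝ) ≤ (k : ℝ) := by exact_mod_cast hmlt.le
      calc ‖p 0 * u ^ (m+1) * p 0‖ * ‖L ξ‖
          ≤ (((m+1:ℕ) : ℝ) * δ) * ‖L ξ‖ := mul_le_mul_of_nonneg_right h1 (norm_nonneg _)
        _ ≤ ((k:ℝ) * δ) * ‖L ξ‖ :=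
            mul_le_mul_of_nonneg_right
              (mul_le_mul_of_nonneg_right h2 hδpos.le) (norm_nonneg _)
    calc ∑ m ∈ Finset.range n, ‖L (a ^ (m+1) • ((p 0 * u ^ (m+1) * p 0) *ᵥ ξ))‖
        ≤ ∑ _m ∈ Finset.range n, (k : ℝ) * δ * ‖L ξ‖ := Finset.sum_le_sum hterm
      _ = (n : ℝ) * ((k : ℝ) * δ * ‖L ξ‖) := by
          rw [Finset.sum_const, Finset.card_range, nsmul_eq_mul]
      _ ≤ (1/2) * ‖L ξ‖ := by
          have e2 : (k:ℝ) * ((k : ℝ) * δ * ‖L ξ‖) = (1/2) * ‖L ξ‖ := by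
            rw [hδdef]; field_simp
          have e3 : (n:ℝ) * ((k : ℝ) * δ * ‖L ξ‖) ≤ (k:ℝ) * ((k : ℝ) * δ * ‖L ξ‖) :=
            mul_le_mul_of_nonneg_right hnk
              (mul_nonneg (mul_nonneg hkpos.le hδpos.le) (norm_nonneg _))
          linarith
  refine ⟨w, ?_, ?_⟩
  · -- w ≠ 0
    intro hw0
    rw [hw0, Matrix.mulVec_zero] at hPw
    have hS : (∑ m ∈ Finset.range n, a ^ (m+1) • ((p 0 * u ^ (m+1) * p 0) *ᵥ ξ)) = -ξ :=
      add_eq_zero_iff_eq_neg.mp hPw.symm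
    have hle : ‖L ξ‖ ≤ (1/2) * ‖L ξ‖ := by
      have := hbound
      rw [hS, _root_.map_neg, norm_neg] at this
      exact this
    linarith
  · -- eigen equation
    have hlin : u *ᵥ w = ∑ m ∈ Finset.range k, a ^ m • ((u ^ (m+1)) *ᵥ ξ) := by
      rw [hwdef, ← Matrix.mulVecLin_apply, _root_.map_sum]
      refine Finset.sum_congr rfl fun m _ => ?_
      rw [_root_.map_smul, Matrix.mulVecLin_apply, Matrix.mulVec_mulVec, ← pow_succ']
    have han : a ^ n = c := by
      have h3 : a ^ n * (c * a) = c * a ^ k := by rw [hn]; ring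
      rw [hca, mul_one, hak, mul_one] at h3
      exact h3
    show u *ᵥ w = c • w
    calc u *ᵥ w = ∑ m ∈ Finset.range (n+1), a ^ m • ((u ^ (m+1)) *ᵥ ξ) := by
          rw [hlin, hrange]
      _ = (∑ m ∈ Finset.range n, a ^ m • ((u ^ (m+1)) *ᵥ ξ)) + a ^ n • ((u ^ (n+1)) *ᵥ ξ) :=
          Finset.sum_range_succ _ n
      _ = (∑ m ∈ Finset.range n, (c * a ^ (m+1)) • ((u ^ (m+1)) *ᵥ ξ))
            + (c * a ^ 0) • ((u ^ 0) *ᵥ ξ) := by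
          congr 1
          · refine Finset.sum_congr rfl fun m _ => ?_
            have h2 : c * a ^ (m + 1) = a ^ m := by
              rw [pow_succ]
              calc c * (a ^ m * a) = (c * a) * a ^ m := by ring
                _ = a ^ m := by rw [hca, one_mul]
            rw [h2]
          · have e1 : u ^ (n+1) = 1 := by rw [← hn]; exact huk
            simp [e1, han, Matrix.one_mulVec]
      _ = ∑ m ∈ Finset.range (n+1), (c * a ^ m) • ((u ^ m) *ᵥ ξ) :=
          (Finset.sum_range_succ' (fun m => (c * a ^ m) • ((u ^ m) *ᵥ ξ)) n).symm
      _ = c • w := by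
          rw [hwdef, hrange, Finset.smul_sum]
          refine Finset.sum_congr rfl fun m _ => ?_
          rw [smul_smul]
end
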